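/- Recursion for transition coefficients: for a matrix T ∈ M_{m×n}(ℝ), multi-indices α ∈ ℕ^m with |α| = N', β ∈ ℕ^n with |β| = N'−1, and 1 ≤ ℓ ≤ n, one has (β_ℓ + 1) A_{α, β+δ_ℓ} = Σ_{k=1}^m α_k T_{k,ℓ} A_{α−δ_k, β}. -/

import Mathlib

open MeasureTheory MvPolynomial

noncomputable section

open scoped Classical in
def transCoeff {m n : ℕ} (T : Matrix (Fin m) (Fin n) ℝ)
    (α : Fin m → ℕ) (β : Fin n → ℕ) : ℝ :=
  ∑ᶠ Γ : Matrix (Fin m) (Fin n) ℕ,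
    if (∀ i, ∑ j, Γ i j = α i) ∧ (∀ j, ∑ i, Γ i j = β j) then
      ((∏ i, Nat.factorial (α i) : ℕ) : ℝ) / ((∏ i, ∏ j, Nat.factorial (Γ i j) : ℕ) : ℝ) * ∏ i, ∏ j, T i j ^ Γ i j
    else 0

section Helpers

variable {m n : ℕ}

theorem prod_single_mul {p : ℕ} (f g : Fin p → ℝ) (k : Fin p) (d : ℝ)
    (hoff : ∀ i, i ≠ k → f i = g i) (hd : f k = d * g k) :
    ∏ i, f i = d * ∏ i, g i := by
  rw [← Finset.prod_erase_mul Finset.univ f (Finset.mem_univ k),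
      ← Finset.prod_erase_mul Finset.univ g (Finset.mem_univ k),
      Finset.prod_congr rfl (fun i hi => hoff i (Finset.ne_of_mem_erase hi)), hd]
  ring

theorem prod_prod_single_mul (f g : Fin m → Fin n → ℝ) (k : Fin m) (ℓ : Fin n) (d : ℝ)
    (hoff : ∀ i j, ¬(i = k ∧ j = ℓ) → f i j = g i j) (hd : f k ℓ = d * g k ℓ) :
    (∏ i, ∏ j, f i j) = d * ∏ i, ∏ j, g i j := by
  have hk : (∏ j, f k j) = d * ∏ j, g k j :=
    prod_single_mul _ _ ℓ d (fun j hj => hoff k j (by tauto)) hd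
  rw [← Finset.prod_erase_mul Finset.univ (fun i => ∏ j, f i j) (Finset.mem_univ k),
      ← Finset.prod_erase_mul Finset.univ (fun i => ∏ j, g i j) (Finset.mem_univ k),
      Finset.prod_congr rfl (fun i hi =>
        Finset.prod_congr rfl fun j _ =>
          hoff i j (by have := Finset.ne_of_mem_erase hi; tauto)), hk]
  ring

theorem sum_sub_ite {p : ℕ} (f : Fin p → ℕ) (ℓ : Fin p) (h : 1 ≤ f ℓ) :
    ∑ j, (f j - if j = ℓ then 1 else 0) = (∑ j, f j) - 1 := by
  have h1 : ∑ j, ((f j - if j = ℓ then 1 else 0) + (if j = ℓ then 1 else 0)) = ∑ j, f j :=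
    Finset.sum_congr rfl (fun j _ => by
      by_cases hj : j = ℓ
      · simp [hj, Nat.sub_add_cancel h]
      · simp [hj])
  rw [Finset.sum_add_distrib, Finset.sum_ite_eq'] at h1
  simp only [Finset.mem_univ, if_true] at h1
  have h2 : 1 ≤ ∑ j, f j :=
    le_trans h (Finset.single_le_sum (fun i _ => Nat.zero_le _) (Finset.mem_univ ℓ))
  omega

theorem sum_add_ite {p : ℕ} (f : Fin p → ℕ) (ℓ : Fin p) :
    ∑ j, (f j + if j = ℓ then 1 else 0) = (∑ j, f j) + 1 := by
  rw [Finset.sum_add_distrib, Finset.sum_ite_eq']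
  simp

theorem pow_eq_mul_pow_pred (x : ℝ) (c : ℕ) (hc : 1 ≤ c) : x ^ c = x * x ^ (c - 1) := by
  conv_lhs => rw [show c = (c - 1) + 1 from by omega]
  rw [pow_succ, mul_comm]

open scoped Classical in
theorem transCoeff_eq_sum (T : Matrix (Fin m) (Fin n) ℝ) (a : Fin m → ℕ) (b : Fin n → ℕ)
    (B : ℕ) (hB : ∀ i, a i ≤ B) :
    transCoeff T a b =
      ∑ Γ ∈ (Fintype.piFinset (fun _ : Fin m => Fintype.piFinset fun _ : Fin n =>
          Finset.range (B + 1)) : Finset (Matrix (Fin m) (Fin n) ℕ)),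
        (if (∀ i, ∑ j, Γ i j = a i) ∧ (∀ j, ∑ i, Γ i j = b j) then
          ((∏ i, Nat.factorial (a i) : ℕ) : ℝ) / ((∏ i, ∏ j, Nat.factorial (Γ i j) : ℕ) : ℝ) *
            ∏ i, ∏ j, T i j ^ Γ i j
        else 0) := by
  apply finsum_eq_finset_sum_of_support_subset
  intro Γ hΓ
  simp only [Function.mem_support] at hΓ
  by_cases hc : (∀ i, ∑ j, Γ i j = a i) ∧ (∀ j, ∑ i, Γ i j = b j)
  · refine Finset.mem_coe.mpr (Fintype.mem_piFinset.mpr fun i =>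
      Fintype.mem_piFinset.mpr fun j => Finset.mem_range.mpr ?_)
    have h1 : Γ i j ≤ ∑ j', Γ i j' :=
      Finset.single_le_sum (fun _ _ => Nat.zero_le _) (Finset.mem_univ j)
    have := hc.1 i
    have := hB i
    omega
  · simp [hc] at hΓ

end Helpers

theorem transCoeff_recursion {m n : ℕ} (T : Matrix (Fin m) (Fin n) ℝ)
    (N' : ℕ) (hN' : 0 < N')
    (α : Fin m → ℕ) (hα : ∑ k, α k = N')
    (β : Fin n → ℕ) (hβ : ∑ j, β j = N' - 1)
    (ℓ : Fin n) :
    ((β ℓ + 1 : ℕ) : ℝ) *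
        transCoeff T α (fun j => β j + if j = ℓ then 1 else 0) =
      ∑ k, (α k : ℝ) * T k ℓ *
        transCoeff T (fun i => α i - if i = k then 1 else 0) β := by
  classical
  have hαB : ∀ i, α i ≤ N' := by
    intro i
    rw [← hα]
    exact Finset.single_le_sum (fun _ _ => Nat.zero_le _) (Finset.mem_univ i)
  rw [transCoeff_eq_sum T α _ N' hαB]
  beta_reduce
  have hR : ∀ k, transCoeff T (fun i => α i - if i = k then 1 else 0) β =
      ∑ Γ ∈ (Fintype.piFinset (fun _ : Fin m => Fintype.piFinset fun _ : Fin n =>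
          Finset.range (N' + 1)) : Finset (Matrix (Fin m) (Fin n) ℕ)),
        (if (∀ i, ∑ j, Γ i j = α i - if i = k then 1 else 0) ∧ (∀ j, ∑ i, Γ i j = β j) then
          ((∏ i, Nat.factorial (α i - if i = k then 1 else 0) : ℕ) : ℝ) /
            ((∏ i, ∏ j, Nat.factorial (Γ i j) : ℕ) : ℝ) * ∏ i, ∏ j, T i j ^ Γ i j
        else 0) :=
    fun k => transCoeff_eq_sum T _ β N' (fun i => le_trans (Nat.sub_le _ _) (hαB i))
  simp only [hR]
  set S : Finset (Matrix (Fin m) (Fin n) ℕ) :=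
    (Fintype.piFinset (fun _ : Fin m => Fintype.piFinset fun _ : Fin n =>
      Finset.range (N' + 1)) : Finset (Matrix (Fin m) (Fin n) ℕ)) with hS
  have memS : ∀ Γ : Matrix (Fin m) (Fin n) ℕ, (∀ i j, Γ i j ≤ N') → Γ ∈ S := by
    intro Γ h
    rw [hS]
    exact Fintype.mem_piFinset.mpr fun i => Fintype.mem_piFinset.mpr fun j =>
      Finset.mem_range.mpr (Nat.lt_succ_of_le (h i j))
  have memS' : ∀ Γ : Matrix (Fin m) (Fin n) ℕ, Γ ∈ S → ∀ i j, Γ i j ≤ N' := by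
    intro Γ h i j
    rw [hS] at h
    have := Fintype.mem_piFinset.mp (Fintype.mem_piFinset.mp h i) j
    exact Nat.lt_succ_iff.mp (Finset.mem_range.mp this)
  -- Step 1: LHS = ∑_k ∑_Γ (Γ k ℓ) * term
  have step1' : ∀ Γ ∈ S, ((β ℓ + 1 : ℕ) : ℝ) *
      (if (∀ i, ∑ j, Γ i j = α i) ∧ (∀ j, ∑ i, Γ i j = β j + if j = ℓ then 1 else 0) then
          ((∏ i, Nat.factorial (α i) : ℕ) : ℝ) / ((∏ i, ∏ j, Nat.factorial (Γ i j) : ℕ) : ℝ) *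
            ∏ i, ∏ j, T i j ^ Γ i j
        else 0) =
      ∑ k, (Γ k ℓ : ℝ) *
        (if (∀ i, ∑ j, Γ i j = α i) ∧ (∀ j, ∑ i, Γ i j = β j + if j = ℓ then 1 else 0) then
          ((∏ i, Nat.factorial (α i) : ℕ) : ℝ) / ((∏ i, ∏ j, Nat.factorial (Γ i j) : ℕ) : ℝ) *
            ∏ i, ∏ j, T i j ^ Γ i j
        else 0) := by
    intro Γ _
    by_cases hc : (∀ i, ∑ j, Γ i j = α i) ∧ (∀ j, ∑ i, Γ i j = β j + if j = ℓ then 1 else 0)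
    · have hcol : ∑ i, Γ i ℓ = β ℓ + 1 := by simpa using hc.2 ℓ
      rw [if_pos hc, ← Finset.sum_mul]
      congr 1
      rw [← hcol]
      push_cast
      ring
    · simp [hc]
  rw [Finset.mul_sum]
  refine Eq.trans (Finset.sum_congr rfl step1') ?_
  rw [Finset.sum_comm]
  apply Finset.sum_congr rfl
  intro k _
  rw [Finset.mul_sum]
  by_cases hk : α k = 0
  · -- both sides vanish
    trans (0 : ℝ)
    · refine Finset.sum_eq_zero fun Γ _ => ?_
      by_cases hc : (∀ i, ∑ j, Γ i j = α i) ∧ (∀ j, ∑ i, Γ i j = β j + if j = ℓ then 1 else 0)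
      · have h1 : Γ k ℓ ≤ ∑ j, Γ k j :=
          Finset.single_le_sum (fun _ _ => Nat.zero_le _) (Finset.mem_univ ℓ)
        have h2 := hc.1 k
        have h3 : Γ k ℓ = 0 := by omega
        simp [h3]
      · simp [hc]
    · exact (Finset.sum_eq_zero fun Γ _ => by simp [hk]).symm
  -- main case: α k ≥ 1
  have hk1 : 1 ≤ α k := Nat.one_le_iff_ne_zero.mpr hk
  refine (Finset.sum_filter_of_ne (s := S)
      (p := fun Γ => ((∀ i, ∑ j, Γ i j = α i) ∧
        (∀ j, ∑ i, Γ i j = β j + if j = ℓ then 1 else 0)) ∧ Γ k ℓ ≠ 0)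
      (fun Γ _ hne => ?_)).symm.trans
    ((?_ : _ = _).trans (Finset.sum_filter_of_ne (s := S)
      (p := fun Γ => (∀ i, ∑ j, Γ i j = α i - if i = k then 1 else 0) ∧
        (∀ j, ∑ i, Γ i j = β j))
      (fun Γ _ hne => ?_)))
  · by_cases hc : (∀ i, ∑ j, Γ i j = α i) ∧ (∀ j, ∑ i, Γ i j = β j + if j = ℓ then 1 else 0)
    · refine ⟨hc, fun h0 => ?_⟩
      rw [h0] at hne
      simp at hne
    · simp [hc] at hne
  rotate_left
  · by_cases hc : (∀ i, ∑ j, Γ i j = α i - if i = k then 1 else 0) ∧ (∀ j, ∑ i, Γ i j = β j)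
    · exact hc
    · simp [hc] at hne
  -- key membership fact for the forward (subtraction) map
  have hsub_mem : ∀ Γ : Matrix (Fin m) (Fin n) ℕ,
      Γ ∈ S.filter (fun Γ => ((∀ i, ∑ j, Γ i j = α i) ∧
        (∀ j, ∑ i, Γ i j = β j + if j = ℓ then 1 else 0)) ∧ Γ k ℓ ≠ 0) →
      ((fun i j => Γ i j - if i = k ∧ j = ℓ then 1 else 0) : Matrix (Fin m) (Fin n) ℕ) ∈
        S.filter (fun Γ => (∀ i, ∑ j, Γ i j = α i - if i = k then 1 else 0) ∧
          (∀ j, ∑ i, Γ i j = β j)) := by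
    intro Γ hΓ
    rw [Finset.mem_filter] at hΓ
    refine Finset.mem_filter.mpr ?_
    obtain ⟨hΓS, ⟨hrow, hcol⟩, hc0⟩ := hΓ
    have hc1 : 1 ≤ Γ k ℓ := Nat.one_le_iff_ne_zero.mpr hc0
    refine ⟨memS _ (fun i j => le_trans (Nat.sub_le _ _) (memS' Γ hΓS i j)), ?_, ?_⟩
    · intro i
      by_cases hi : i = k
      · have e : ∀ j : Fin n, Γ i j - (if i = k ∧ j = ℓ then 1 else 0) =
            Γ i j - (if j = ℓ then 1 else 0) := fun j => by simp [hi]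
        simp only [e]
        rw [hi, sum_sub_ite (Γ k) ℓ (by rwa [← hi] at hc1 ⊢ <;> rwa [hi]), hrow k]
        simp
      · have e : ∀ j : Fin n, Γ i j - (if i = k ∧ j = ℓ then 1 else 0) = Γ i j := fun j => by
          simp [hi]
        simp only [e]
        simp [hrow i, hi]
    · intro j
      by_cases hj : j = ℓ
      · have e : ∀ i : Fin m, Γ i j - (if i = k ∧ j = ℓ then 1 else 0) =
            Γ i j - (if i = k then 1 else 0) := fun i => by simp [hj]
        simp only [e]
        rw [hj, sum_sub_ite (fun i => Γ i ℓ) k hc1]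
        have hc2 := hcol ℓ
        simp at hc2
        have h3 : Γ k ℓ ≤ ∑ i, Γ i ℓ :=
          Finset.single_le_sum (f := fun i => Γ i ℓ) (fun _ _ => Nat.zero_le _)
            (Finset.mem_univ k)
        omega
      · have e : ∀ i : Fin m, Γ i j - (if i = k ∧ j = ℓ then 1 else 0) = Γ i j := fun i => by
          simp [hj]
        simp only [e]
        have hc2 := hcol j
        simp [hj] at hc2
        exact hc2
  refine Finset.sum_nbij'
    (i := fun Γ => ((fun i j => Γ i j - if i = k ∧ j = ℓ then 1 else 0) :
        Matrix (Fin m) (Fin n) ℕ))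
    (j := fun Γ => ((fun i j => Γ i j + if i = k ∧ j = ℓ then 1 else 0) :
        Matrix (Fin m) (Fin n) ℕ))
    hsub_mem ?_ ?_ ?_ ?_
  · -- add map membership
    intro Γ hΓ
    rw [Finset.mem_filter] at hΓ
    refine Finset.mem_filter.mpr ?_
    obtain ⟨hΓS, hrow, hcol⟩ := hΓ
    have hbk : ∑ j, Γ k j = α k - 1 := by simpa using hrow k
    beta_reduce
    refine ⟨memS _ ?_, ⟨?_, ?_⟩, by simp⟩
    · intro i j
      show Γ i j + (if i = k ∧ j = ℓ then 1 else 0) ≤ N'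
      by_cases hij : i = k ∧ j = ℓ
      · have e1 : (if i = k ∧ j = ℓ then 1 else 0 : ℕ) = 1 := if_pos hij
        rw [e1]
        have h1 : Γ i j ≤ ∑ j', Γ i j' :=
          Finset.single_le_sum (f := Γ i) (fun _ _ => Nat.zero_le _) (Finset.mem_univ j)
        have h2 := hrow i
        have e2 : (if i = k then 1 else 0 : ℕ) = 1 := if_pos hij.1
        rw [e2] at h2
        have h4 : 1 ≤ α i := hij.1 ▸ hk1
        have h5 := hαB i
        omega
      · have e1 : (if i = k ∧ j = ℓ then 1 else 0 : ℕ) = 0 := if_neg hij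
        rw [e1]
        simpa using memS' Γ hΓS i j
    · intro i
      by_cases hi : i = k
      · have e : ∀ j : Fin n, Γ i j + (if i = k ∧ j = ℓ then 1 else 0) =
            Γ i j + (if j = ℓ then 1 else 0) := fun j => by simp [hi]
        simp only [e]
        rw [sum_add_ite (Γ i) ℓ, hi, hbk]
        omega
      · have e : ∀ j : Fin n, Γ i j + (if i = k ∧ j = ℓ then 1 else 0) = Γ i j := fun j => by
          simp [hi]
        simp only [e]
        have := hrow i
        simpa [hi] using this
    · intro j
      by_cases hj : j = ℓ
      · have e : ∀ i : Fin m, Γ i j + (if i = k ∧ j = ℓ then 1 else 0) =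
            Γ i j + (if i = k then 1 else 0) := fun i => by simp [hj]
        simp only [e]
        rw [sum_add_ite (fun i => Γ i j) k, hcol j]
        simp [hj]
      · have e : ∀ i : Fin m, Γ i j + (if i = k ∧ j = ℓ then 1 else 0) = Γ i j := fun i => by
          simp [hj]
        simp only [e]
        rw [hcol j]
        simp [hj]
  · -- left inverse
    intro Γ hΓ
    rw [Finset.mem_filter] at hΓ
    obtain ⟨_, ⟨hrow, hcol⟩, hc0⟩ := hΓ
    have hc1 : 1 ≤ Γ k ℓ := Nat.one_le_iff_ne_zero.mpr hc0
    funext i j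
    show (Γ i j - if i = k ∧ j = ℓ then 1 else 0) + (if i = k ∧ j = ℓ then 1 else 0) = Γ i j
    by_cases hij : i = k ∧ j = ℓ
    · have e1 : (if i = k ∧ j = ℓ then 1 else 0 : ℕ) = 1 := if_pos hij
      rw [e1]
      have h1 : 1 ≤ Γ i j := by rw [hij.1, hij.2]; exact hc1
      omega
    · have e1 : (if i = k ∧ j = ℓ then 1 else 0 : ℕ) = 0 := if_neg hij
      rw [e1]
      omega
  · -- right inverse
    intro Γ _
    funext i j
    show (Γ i j + if i = k ∧ j = ℓ then 1 else 0) - (if i = k ∧ j = ℓ then 1 else 0) = Γ i j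
    omega
  · -- term equality
    intro Γ hΓ
    have hmem2 := hsub_mem Γ hΓ
    rw [Finset.mem_filter] at hΓ
    replace hmem2 := Finset.mem_filter.mp hmem2
    obtain ⟨hΓS, hc1, hc0⟩ := hΓ
    have hcc : 1 ≤ Γ k ℓ := Nat.one_le_iff_ne_zero.mpr hc0
    beta_reduce
    have hcond2 := hmem2.2
    beta_reduce at hcond2
    rw [if_pos hc1, if_pos hcond2]
    push_cast
    have eqP : (∏ i, ((α i).factorial : ℝ)) =
        (α k : ℝ) * ∏ i, (((α i - if i = k then 1 else 0).factorial : ℝ)) := by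
      refine prod_single_mul _ _ k _ (fun i hi => by simp [hi]) ?_
      rw [if_pos rfl]
      exact_mod_cast (Nat.mul_factorial_pred hk).symm
    have eqQ : (∏ i, ∏ j, ((Γ i j).factorial : ℝ)) =
        (Γ k ℓ : ℝ) * ∏ i, ∏ j, (((Γ i j - if i = k ∧ j = ℓ then 1 else 0).factorial : ℝ)) := by
      refine prod_prod_single_mul _ _ k ℓ _ (fun i j hij => by simp [hij]) ?_
      rw [if_pos (⟨rfl, rfl⟩ : k = k ∧ ℓ = ℓ)]
      exact_mod_cast (Nat.mul_factorial_pred hc0).symm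
    have eqR : (∏ i, ∏ j, T i j ^ Γ i j) =
        T k ℓ * ∏ i, ∏ j, T i j ^ (Γ i j - if i = k ∧ j = ℓ then 1 else 0) := by
      refine prod_prod_single_mul _ _ k ℓ _ (fun i j hij => by simp [hij]) ?_
      rw [if_pos (⟨rfl, rfl⟩ : k = k ∧ ℓ = ℓ)]
      exact pow_eq_mul_pow_pred _ _ hcc
    rw [eqP, eqQ, eqR]
    have hQ' : (∏ i, ∏ j, (((Γ i j - if i = k ∧ j = ℓ then 1 else 0).factorial : ℝ))) ≠ 0 := by
      positivity
    have hcne : (Γ k ℓ : ℝ) ≠ 0 := Nat.cast_ne_zero.mpr hc0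
    field_simp

end
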